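/- In the exponential lower-bound instance with parameter n ≥ 2, let σ be any schedule in which jobs ℓ, a₂, b₁, c₁ are on machine 1 and jobs a₁, b₂, c₂ are on machine 2 (the remaining jobs assigned arbitrarily). Let σ'' be obtained from σ by moving a₂ to machine 2 and moving a₁ and b₂ to machine 1, and let σ' be obtained from σ'' by moving b₁ and c₁ to machine 2 and moving c₂ to machine 1, all other jobs unchanged. Then each of the two steps changes the assignment of exactly 3 jobs, Cmax σ'' < Cmax σ, and Cmax σ' < Cmax σ''; in σ', jobs a₁, b₂, c₂ are on machine 1 and jobs a₂, b₁, c₁ are on machine 2. -/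

import Mathlib

/-- The jobs of the exponential lower-bound instance with parameter `n`:
jobs `a i`, `b i`, `c i` for each `i : Fin n` (`i` standing for the 1-based index
`i + 1`), together with the large job `l`. -/
inductive LBJob (n : ℕ) where
  | a (i : Fin n)
  | b (i : Fin n)
  | c (i : Fin n)
  | l
  deriving DecidableEq, Fintype

/-- Processing times of the lower-bound instance: with 1-based index `i' = i + 1`,
`p (a i') = 2^(n+i'+1) + 2^(i'-1)`, `p (b i') = 2^(n+i')`,
`p (c i') = 2^(n+i'-1) + 2^(i'-1)`, and `p l = 2^(2n+4)`. -/
def lbp (n : ℕ) : LBJob n → ℕ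
  | .a i => 2 ^ (n + i.1 + 2) + 2 ^ i.1
  | .b i => 2 ^ (n + i.1 + 1)
  | .c i => 2 ^ (n + i.1) + 2 ^ i.1
  | .l => 2 ^ (2 * n + 4)

/-- Load of a machine (`false` = machine 1, `true` = machine 2). -/
def lbLoad (n : ℕ) (m : Bool) (σ : LBJob n → Bool) : ℕ :=
  ∑ j ∈ Finset.univ.filter (fun j => σ j = m), lbp n j

/-- Makespan of a schedule of the lower-bound instance. -/
def lbCmax (n : ℕ) (σ : LBJob n → Bool) : ℕ :=
  max (lbLoad n false σ) (lbLoad n true σ)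

def lbEquiv (n : ℕ) : LBJob n ≃ (Fin n ⊕ Fin n ⊕ Fin n ⊕ Unit) where
  toFun j := match j with
    | .a i => .inl i
    | .b i => .inr (.inl i)
    | .c i => .inr (.inr (.inl i))
    | .l => .inr (.inr (.inr .unit))
  invFun x := match x with
    | .inl i => .a i
    | .inr (.inl i) => .b i
    | .inr (.inr (.inl i)) => .c i
    | .inr (.inr (.inr _)) => .l
  left_inv j := by cases j <;> rfl
  right_inv x := by rcases x with i | i | i | ⟨⟩ <;> rfl

lemma lb_load_swap (n : ℕ) (τ ρ : LBJob n → Bool) (S : Finset (LBJob n)) (m : Bool)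
    (h : ∀ j ∉ S, τ j = ρ j) :
    lbLoad n m τ + ∑ j ∈ S, (if ρ j = m then lbp n j else 0)
      = lbLoad n m ρ + ∑ j ∈ S, (if τ j = m then lbp n j else 0) := by
  unfold lbLoad
  rw [Finset.sum_filter, Finset.sum_filter,
    ← Finset.sum_add_sum_compl S (fun j => if τ j = m then lbp n j else 0),
    ← Finset.sum_add_sum_compl S (fun j => if ρ j = m then lbp n j else 0)]
  have hc : ∑ j ∈ Sᶜ, (if τ j = m then lbp n j else 0)
      = ∑ j ∈ Sᶜ, (if ρ j = m then lbp n j else 0) :=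
    Finset.sum_congr rfl (fun j hj => by rw [h j (Finset.mem_compl.mp hj)])
  omega

lemma two_pow_geom (n : ℕ) : ∑ i ∈ Finset.range n, 2^i + 1 = 2^n := by
  induction n with
  | zero => simp
  | succ k ih => rw [Finset.sum_range_succ, pow_succ]; omega

lemma lb_rest_le (n : ℕ) (hn : 2 ≤ n) :
    ∑ j ∈ Finset.univ.filter (fun j : LBJob n => j ≠ LBJob.l), lbp n j ≤ 2^(2*n+3) := by
  rw [Finset.sum_filter]
  rw [Fintype.sum_equiv (lbEquiv n) _
      (fun x => if (lbEquiv n).symm x = LBJob.l then 0 else lbp n ((lbEquiv n).symm x))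
      (fun j => by simp)]
  simp only [Fintype.sum_sum_type]
  simp only [Finset.univ_unique, Finset.sum_singleton]
  simp only [lbEquiv, Equiv.coe_fn_symm_mk, lbp, reduceCtorEq, if_false, if_neg]
  simp only [if_true, add_zero, Finset.sum_add_distrib]
  rw [Fin.sum_univ_eq_sum_range (fun i => 2^(n+i+2)) n,
    Fin.sum_univ_eq_sum_range (fun i => 2^(n+i+1)) n,
    Fin.sum_univ_eq_sum_range (fun i => 2^(n+i)) n,
    Fin.sum_univ_eq_sum_range (fun i => 2^i) n]
  have key : ∀ k, ∑ i ∈ Finset.range n, 2^(n+i+k) = (∑ i ∈ Finset.range n, 2^i) * 2^(n+k) := by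
    intro k
    rw [Finset.sum_mul]
    refine Finset.sum_congr rfl fun i _ => ?_
    rw [← pow_add]
    congr 1
    omega
  have k2 := key 2
  have k1 := key 1
  have k0 := key 0
  simp only [Nat.add_zero] at k0
  rw [k2, k1, k0]
  have hS := two_pow_geom n
  set S := ∑ i ∈ Finset.range n, 2^i with hSdef
  have hx4 : 4 ≤ 2^n := by
    calc (4:ℕ) = 2^2 := by norm_num
    _ ≤ 2^n := Nat.pow_le_pow_right (by norm_num) hn
  have e1 : (2:ℕ)^(n+1) = 2 * 2^n := by ring
  have e2 : (2:ℕ)^(n+2) = 4 * 2^n := by ring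
  have e3 : (2:ℕ)^(2*n+3) = 8 * (2^n * 2^n) := by
    rw [← pow_add]; ring_nf
  set x := (2:ℕ)^n
  rw [e1, e2, e3]
  nlinarith [sq_nonneg x]

/-- Lemma (swapping back the first triple while moving the second): if `ℓ, a₂, b₁, c₁`
are on machine 1 and `a₁, b₂, c₂` are on machine 2, then the 3-swap moving `a₂` to
machine 2 and `a₁, b₂` to machine 1, followed by the 3-swap moving `b₁, c₁` to
machine 2 and `c₂` to machine 1, each change exactly 3 jobs and each strictly
decreases the makespan; afterwards `a₁, b₂, c₂` are on machine 1 and `a₂, b₁, c₁` are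
on machine 2. -/
theorem lb_second_swap (n : ℕ) (hn : 2 ≤ n)
    (i1 i2 : Fin n) (hi1 : i1.1 = 0) (hi2 : i2.1 = 1)
    (σ σ'' σ' : LBJob n → Bool)
    (hl : σ .l = false)
    (ha2 : σ (.a i2) = false) (hb1 : σ (.b i1) = false) (hc1 : σ (.c i1) = false)
    (ha1 : σ (.a i1) = true) (hb2 : σ (.b i2) = true) (hc2 : σ (.c i2) = true)
    (h''a2 : σ'' (.a i2) = true) (h''a1 : σ'' (.a i1) = false) (h''b2 : σ'' (.b i2) = false)
    (h''rest : ∀ j : LBJob n, j ≠ .a i2 → j ≠ .a i1 → j ≠ .b i2 → σ'' j = σ j)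
    (h'b1 : σ' (.b i1) = true) (h'c1 : σ' (.c i1) = true) (h'c2 : σ' (.c i2) = false)
    (h'rest : ∀ j : LBJob n, j ≠ .b i1 → j ≠ .c i1 → j ≠ .c i2 → σ' j = σ'' j) :
    (Finset.univ.filter (fun j => σ j ≠ σ'' j)).card = 3 ∧
    (Finset.univ.filter (fun j => σ'' j ≠ σ' j)).card = 3 ∧
    lbCmax n σ'' < lbCmax n σ ∧
    lbCmax n σ' < lbCmax n σ'' ∧
    σ' (.a i1) = false ∧ σ' (.b i2) = false ∧ σ' (.c i2) = false ∧
    σ' (.a i2) = true ∧ σ' (.b i1) = true ∧ σ' (.c i1) = true := by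
  have hne : i2 ≠ i1 := by
    intro h; rw [h, hi1] at hi2; omega
  have hne' : i1 ≠ i2 := hne.symm
  -- values of σ'' on the untouched special jobs
  have h''l : σ'' LBJob.l = false := by rw [h''rest _ (by simp) (by simp) (by simp)]; exact hl
  have h''b1 : σ'' (.b i1) = false := by
    rw [h''rest _ (by simp) (by simp) (by simp [hne'])]; exact hb1
  have h''c1 : σ'' (.c i1) = false := by
    rw [h''rest _ (by simp) (by simp) (by simp)]; exact hc1
  have h''c2 : σ'' (.c i2) = true := by
    rw [h''rest _ (by simp) (by simp) (by simp)]; exact hc2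
  -- values of σ' on the untouched special jobs
  have h'a1 : σ' (.a i1) = false := by
    rw [h'rest _ (by simp) (by simp) (by simp)]; exact h''a1
  have h'a2 : σ' (.a i2) = true := by
    rw [h'rest _ (by simp) (by simp) (by simp)]; exact h''a2
  have h'b2 : σ' (.b i2) = false := by
    rw [h'rest _ (by simp [hne]) (by simp) (by simp)]; exact h''b2
  have h'l : σ' LBJob.l = false := by
    rw [h'rest _ (by simp) (by simp) (by simp)]; exact h''l
  -- card of first symmetric difference
  have hset1 : Finset.univ.filter (fun j => σ j ≠ σ'' j)
      = {LBJob.a i2, LBJob.a i1, LBJob.b i2} := by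
    ext j
    simp only [Finset.mem_filter, Finset.mem_univ, true_and, Finset.mem_insert,
      Finset.mem_singleton]
    constructor
    · intro hj
      by_contra hc
      push_neg at hc
      exact hj (h''rest j hc.1 hc.2.1 hc.2.2).symm
    · rintro (rfl | rfl | rfl) <;> simp [ha2, h''a2, ha1, h''a1, hb2, h''b2]
  have hcard1 : (Finset.univ.filter (fun j => σ j ≠ σ'' j)).card = 3 := by
    rw [hset1]
    rw [Finset.card_insert_of_notMem (by simp [hne]),
      Finset.card_insert_of_notMem (by simp), Finset.card_singleton]
  have hset2 : Finset.univ.filter (fun j => σ'' j ≠ σ' j)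
      = {LBJob.b i1, LBJob.c i1, LBJob.c i2} := by
    ext j
    simp only [Finset.mem_filter, Finset.mem_univ, true_and, Finset.mem_insert,
      Finset.mem_singleton]
    constructor
    · intro hj
      by_contra hc
      push_neg at hc
      exact hj (h'rest j hc.1 hc.2.1 hc.2.2).symm
    · rintro (rfl | rfl | rfl) <;> simp [h''b1, h'b1, h''c1, h'c1, h''c2, h'c2]
  have hcard2 : (Finset.univ.filter (fun j => σ'' j ≠ σ' j)).card = 3 := by
    rw [hset2]
    rw [Finset.card_insert_of_notMem (by simp),
      Finset.card_insert_of_notMem (by simp [hne']), Finset.card_singleton]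
  -- load equations, step 1
  have hS1f := lb_load_swap n σ σ'' ({LBJob.a i2, LBJob.a i1, LBJob.b i2}) false
    (fun j hj => by
      simp only [Finset.mem_insert, Finset.mem_singleton, not_or] at hj
      exact (h''rest j hj.1 hj.2.1 hj.2.2).symm)
  have hS1t := lb_load_swap n σ σ'' ({LBJob.a i2, LBJob.a i1, LBJob.b i2}) true
    (fun j hj => by
      simp only [Finset.mem_insert, Finset.mem_singleton, not_or] at hj
      exact (h''rest j hj.1 hj.2.1 hj.2.2).symm)
  rw [Finset.sum_insert (by simp [hne]), Finset.sum_insert (by simp),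
    Finset.sum_singleton, Finset.sum_insert (by simp [hne]), Finset.sum_insert (by simp),
    Finset.sum_singleton] at hS1f hS1t
  simp only [ha2, ha1, hb2, h''a2, h''a1, h''b2, lbp, hi1, hi2, if_true, if_false,
    Bool.true_eq_false, Bool.false_eq_true, pow_zero, pow_one, Nat.add_zero] at hS1f hS1t
  -- load equations, step 2
  have hS2f := lb_load_swap n σ'' σ' ({LBJob.b i1, LBJob.c i1, LBJob.c i2}) false
    (fun j hj => by
      simp only [Finset.mem_insert, Finset.mem_singleton, not_or] at hj
      exact (h'rest j hj.1 hj.2.1 hj.2.2).symm)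
  have hS2t := lb_load_swap n σ'' σ' ({LBJob.b i1, LBJob.c i1, LBJob.c i2}) true
    (fun j hj => by
      simp only [Finset.mem_insert, Finset.mem_singleton, not_or] at hj
      exact (h'rest j hj.1 hj.2.1 hj.2.2).symm)
  rw [Finset.sum_insert (by simp), Finset.sum_insert (by simp [hne']),
    Finset.sum_singleton, Finset.sum_insert (by simp), Finset.sum_insert (by simp [hne']),
    Finset.sum_singleton] at hS2f hS2t
  simp only [h''b1, h''c1, h''c2, h'b1, h'c1, h'c2, lbp, hi1, hi2, if_true, if_false,
    Bool.true_eq_false, Bool.false_eq_true, pow_zero, pow_one, Nat.add_zero] at hS2f hS2t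
  -- bounds
  have hB1 : 2^(2*n+4) ≤ lbLoad n false σ := by
    have hmem : LBJob.l ∈ Finset.univ.filter (fun j => σ j = false) := by simp [hl]
    have := Finset.single_le_sum (f := lbp n) (fun j _ => Nat.zero_le _) hmem
    simpa [lbp, lbLoad] using this
  have hRest := lb_rest_le n hn
  have hB2 : lbLoad n true σ ≤ 2^(2*n+3) := by
    refine le_trans (Finset.sum_le_sum_of_subset ?_) hRest
    intro j hj
    simp only [Finset.mem_filter, Finset.mem_univ, true_and] at hj ⊢
    intro hjl
    rw [hjl, hl] at hj
    exact Bool.false_ne_true hj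
  -- pow arithmetic
  have e1 : (2:ℕ)^(n+1) = 2 * 2^n := by ring
  have e2 : (2:ℕ)^(n+2) = 4 * 2^n := by ring
  have e3 : (2:ℕ)^(n+3) = 8 * 2^n := by ring
  have e4 : (2:ℕ)^(2*n+4) = 2 * 2^(2*n+3) := by ring
  have e5 : 4 * (2:ℕ)^n ≤ 2^(2*n+3) := by
    calc 4 * (2:ℕ)^n = 2^(n+2) := by ring
    _ ≤ 2^(2*n+3) := Nat.pow_le_pow_right (by norm_num) (by omega)
  have hx4 : 4 ≤ 2^n := by
    calc (4:ℕ) = 2^2 := by norm_num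
    _ ≤ 2^n := Nat.pow_le_pow_right (by norm_num) hn
  have e2' : (2:ℕ)^(n+1+1) = 4 * 2^n := by ring
  have e3' : (2:ℕ)^(n+1+2) = 8 * 2^n := by ring
  simp only [e1, e2, e3, e2', e3'] at hS1f hS1t hS2f hS2t
  rw [e4] at hB1
  -- identify makespans
  have hc0 : lbCmax n σ = lbLoad n false σ := max_eq_left (by omega)
  have hc2' : lbCmax n σ'' = lbLoad n false σ'' := max_eq_left (by omega)
  have hc1' : lbCmax n σ' = lbLoad n false σ' := max_eq_left (by omega)
  refine ⟨hcard1, hcard2, ?_, ?_, h'a1, h'b2, h'c2, h'a2, h'b1, h'c1⟩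
  · rw [hc0, hc2']; omega
  · rw [hc2', hc1']; omega
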